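/- arXiv:math/0702638 — 4 statements merged into one kernel-verified Lean document; each statement's English description precedes it below -/
import Mathlib

section
/- Let P be the 4×4 matrix with rows (2,1,1,0), (0,3,0,0), (0,1,2,1), (0,1,1,3), u = (1,0,0,0)ᵀ, e = (1,1,1,1)ᵀ, and a_n = uᵀ P^n e. Then a_n - 5a_{n-1} + 5a_{n-2} = 0 for all n ≥ 2. -/
/-- For the 4×4 production matrix with rows (2,1,1,0), (0,3,0,0), (0,1,2,1), (0,1,1,3),
the induced sequence `a_n = uᵀ P^n e` satisfies `a_n - 5a_{n-1} + 5a_{n-2} = 0`. -/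
theorem stmt5 (a : ℕ → ℚ)
    (ha : ∀ n, a n = dotProduct ![1, 0, 0, 0]
      (((!![2, 1, 1, 0; 0, 3, 0, 0; 0, 1, 2, 1; 0, 1, 1, 3] :
        Matrix (Fin 4) (Fin 4) ℚ) ^ n).mulVec ![1, 1, 1, 1])) :
    ∀ n, a (n + 2) - 5 * a (n + 1) + 5 * a n = 0 := by
  set P : Matrix (Fin 4) (Fin 4) ℚ :=
    !![2, 1, 1, 0; 0, 3, 0, 0; 0, 1, 2, 1; 0, 1, 1, 3] with hP
  have e1 : P.mulVec ![1, 1, 1, 1] = ![4, 3, 4, 5] := by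
    funext i
    fin_cases i <;>
      simp [hP, Matrix.mulVec, dotProduct, Fin.sum_univ_four] <;> norm_num
  have e2 : P.mulVec ![4, 3, 4, 5] = ![15, 9, 16, 22] := by
    funext i
    fin_cases i <;>
      simp [hP, Matrix.mulVec, dotProduct, Fin.sum_univ_four] <;> norm_num
  have e3 : P.mulVec ![0, -1, 1, 2] = ![0, -3, 3, 6] := by
    funext i
    fin_cases i <;>
      simp [hP, Matrix.mulVec, dotProduct, Fin.sum_univ_four] <;> norm_num
  have hv : ∀ n : ℕ, (P ^ n).mulVec ![0, -1, 1, 2] = (3 ^ n : ℚ) • ![0, -1, 1, 2] := by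
    intro n
    induction n with
    | zero => simp
    | succ n ih =>
      have h36 : (![0, -3, 3, 6] : Fin 4 → ℚ) = (3 : ℚ) • ![0, -1, 1, 2] := by
        funext i; fin_cases i <;> norm_num
      rw [pow_succ, ← Matrix.mulVec_mulVec, e3, h36, Matrix.mulVec_smul, ih]
      funext i
      fin_cases i <;>
        simp [Pi.smul_apply, smul_eq_mul, pow_succ] <;> ring
  intro n
  rw [ha, ha, ha]
  have H1 : (P ^ (n + 1)).mulVec ![1, 1, 1, 1] = (P ^ n).mulVec ![4, 3, 4, 5] := by
    rw [pow_succ, ← Matrix.mulVec_mulVec, e1]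
  have H2 : (P ^ (n + 2)).mulVec ![1, 1, 1, 1] = (P ^ n).mulVec ![15, 9, 16, 22] := by
    rw [show n + 2 = n + 1 + 1 from rfl, pow_succ, ← Matrix.mulVec_mulVec, e1,
      pow_succ, ← Matrix.mulVec_mulVec, e2]
  rw [H1, H2]
  have hc : (![15, 9, 16, 22] : Fin 4 → ℚ) =
      ![0, -1, 1, 2] + (5 : ℚ) • ![4, 3, 4, 5] - (5 : ℚ) • ![1, 1, 1, 1] := by
    funext i; fin_cases i <;> norm_num
  rw [hc, Matrix.mulVec_sub, Matrix.mulVec_add, Matrix.mulVec_smul, Matrix.mulVec_smul,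
    hv n, dotProduct_sub, dotProduct_add, dotProduct_smul,
    dotProduct_smul, dotProduct_smul]
  have hz : dotProduct ![(1 : ℚ), 0, 0, 0] ![0, -1, 1, 2] = 0 := by
    simp [dotProduct, Fin.sum_univ_four]
  rw [hz]
  simp only [smul_eq_mul]
  ring
end

section
/- Let P be the infinite ℕ×ℕ matrix with P(0,1)=1, P(n,n)=n for n≥1, and P(n,n+1)=1 for n≥1, all other entries 0 (the Bell production matrix). For each n ≥ 1 let P_n denote the upper-left n×n submatrix. Then the first row of exp(zP_n) equals (1, e^z-1, (e^z-1)²/2!, ..., (e^z-1)^{n-1}/(n-1)!), as an identity of formal power series / analytic functions in z. -/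
/-- Let `P_n` be the upper-left `n×n` submatrix of the Bell production matrix
(diagonal `0,1,2,...`, superdiagonal all 1's). Then the first row of `exp(zP_n)`
is `(1, e^z-1, (e^z-1)²/2!, ..., (e^z-1)^{n-1}/(n-1)!)`. -/
theorem stmt9 (n : ℕ) (hn : 1 ≤ n) (Pn : Matrix (Fin n) (Fin n) ℝ)
    (hPn : ∀ i j : Fin n,
      Pn i j = if (j : ℕ) = (i : ℕ) + 1 then 1 else if j = i then ((i : ℕ) : ℝ) else 0) :
    ∀ z : ℝ, ∀ j : Fin n,
      NormedSpace.exp (z • Pn) ⟨0, hn⟩ j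
        = (Real.exp z - 1) ^ (j : ℕ) / (Nat.factorial (j : ℕ) : ℝ) := by
  classical
  intro z j
  letI : SeminormedRing (Matrix (Fin n) (Fin n) ℝ) := Matrix.linftyOpSemiNormedRing
  letI : NormedRing (Matrix (Fin n) (Fin n) ℝ) := Matrix.linftyOpNormedRing
  letI : NormedAlgebra ℝ (Matrix (Fin n) (Fin n) ℝ) := Matrix.linftyOpNormedAlgebra
  set A := Pn with hA
  set f : ℝ → Fin n → ℝ := fun t k => (Real.exp t - 1) ^ (k : ℕ) / (Nat.factorial (k : ℕ) : ℝ)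
    with hf
  set d : ℝ → Fin n → ℝ := fun t k =>
    ((k : ℕ) : ℝ) * (Real.exp t - 1) ^ ((k : ℕ) - 1) * Real.exp t / (Nat.factorial (k : ℕ) : ℝ)
    with hd
  set F : ℝ → Matrix (Fin n) (Fin n) ℝ := fun t => Matrix.of (fun _ k => f t k) with hF
  set E : ℝ → Matrix (Fin n) (Fin n) ℝ := fun t => NormedSpace.exp (t • A) with hE
  -- the key algebraic identity : F t * A has entries d t k
  have key : ∀ t : ℝ, F t * A = Matrix.of (fun _ k => d t k) := by
    intro t
    ext i k
    rw [Matrix.mul_apply]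
    have step1 : ∀ m : Fin n, F t i m * A m k =
        (if (k : ℕ) = (m : ℕ) + 1 then f t m else 0) +
        (if m = k then ((k : ℕ) : ℝ) * f t m else 0) := by
      intro m
      rw [hPn m k]
      by_cases h1 : (k : ℕ) = (m : ℕ) + 1
      · have h2 : ¬ m = k := by rintro rfl; omega
        have h2' : ¬ k = m := fun h => h2 h.symm
        simp [h1, h2, h2', hF]
      · by_cases h2 : k = m
        · have h2' : m = k := h2.symm
          subst h2'
          simp [h1, hF]
          ring
        · have h2' : ¬ m = k := fun h => h2 h.symm
          simp [h1, h2, h2', hF]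
    rw [Finset.sum_congr rfl (fun m _ => step1 m), Finset.sum_add_distrib,
      Finset.sum_ite_eq' Finset.univ k (fun m => ((k : ℕ) : ℝ) * f t m)]
    simp only [Finset.mem_univ, if_true]
    -- now handle the first sum
    rcases Nat.eq_zero_or_pos (k : ℕ) with hk0 | hkpos
    · have : ∀ m : Fin n, (if (k : ℕ) = (m : ℕ) + 1 then f t m else 0) = 0 := by
        intro m; rw [if_neg]; omega
      rw [Finset.sum_congr rfl (fun m _ => this m), Finset.sum_const_zero]
      simp [hd, hf, hk0]
    · obtain ⟨p, hp⟩ : ∃ p, (k : ℕ) = p + 1 := ⟨(k : ℕ) - 1, by omega⟩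
      have hpn : p < n := by have := k.isLt; omega
      set k' : Fin n := ⟨p, hpn⟩ with hk'
      have cond : ∀ m : Fin n, ((k : ℕ) = (m : ℕ) + 1) ↔ m = k' := by
        intro m
        constructor
        · intro h; apply Fin.ext; simp [hk']; omega
        · rintro rfl; simp [hk']; omega
      have : ∀ m : Fin n, (if (k : ℕ) = (m : ℕ) + 1 then f t m else 0) =
          (if m = k' then f t m else 0) := by
        intro m; exact if_congr (cond m) rfl rfl
      rw [Finset.sum_congr rfl (fun m _ => this m),
        Finset.sum_ite_eq' Finset.univ k' (fun m => f t m)]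
      simp only [Finset.mem_univ, if_true]
      -- pure algebra
      have hfac : ((Nat.factorial (k : ℕ) : ℝ)) = ((k : ℕ) : ℝ) * (Nat.factorial p : ℝ) := by
        rw [hp, Nat.factorial_succ]; push_cast; ring
      have hk1 : (k : ℕ) - 1 = p := by omega
      have hfp : (Nat.factorial p : ℝ) ≠ 0 := Nat.cast_ne_zero.2 (Nat.factorial_ne_zero p)
      have hkc : ((k : ℕ) : ℝ) ≠ 0 := by
        have : (0:ℕ) < (k:ℕ) := hkpos
        positivity
      have hcexp : Real.exp t = (Real.exp t - 1) + 1 := by ring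
      simp only [hd, hf, Matrix.of_apply, hk1]
      rw [hfac, hcexp, hp, pow_succ]
      field_simp
      ring
  -- derivative of F
  have hFderiv : ∀ t : ℝ, HasDerivAt F (F t * A) t := by
    intro t
    let L : (Fin n → Fin n → ℝ) →ₗ[ℝ] Matrix (Fin n) (Fin n) ℝ :=
      { toFun := fun v => (Matrix.of v : Matrix (Fin n) (Fin n) ℝ),
        map_add' := fun _ _ => rfl, map_smul' := fun _ _ => rfl }
    have hcont : Continuous L := LinearMap.continuous_of_finiteDimensional (f := L)
    let Lc : (Fin n → Fin n → ℝ) →L[ℝ] Matrix (Fin n) (Fin n) ℝ := ⟨L, hcont⟩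
    have hpi : HasDerivAt (fun t : ℝ => (fun (_ : Fin n) (k : Fin n) => f t k))
        (fun _ k => d t k) t := by
      rw [hasDerivAt_pi]
      intro i
      rw [hasDerivAt_pi]
      intro k
      have h1 : HasDerivAt (fun t : ℝ => Real.exp t - 1) (Real.exp t) t :=
        (Real.hasDerivAt_exp t).sub_const 1
      have h2 := (h1.pow (k : ℕ)).div_const (Nat.factorial (k : ℕ) : ℝ)
      simpa [hf, hd] using h2
    have := (Lc.hasFDerivAt
        (x := fun (_ : Fin n) (k : Fin n) => f t k)).comp_hasDerivAt t hpi
    rw [key t]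
    exact this
  -- derivative of t ↦ E (-t)
  have hEderiv : ∀ t : ℝ, HasDerivAt (fun t : ℝ => E (-t)) (-(A * E (-t))) t := by
    intro t
    have h1 : HasDerivAt (fun u : ℝ => NormedSpace.exp (u • A)) (A * NormedSpace.exp ((-t) • A))
        (-t) := hasDerivAt_exp_smul_const' (𝕂 := ℝ) A (-t)
    have h2 : HasDerivAt (fun t : ℝ => -t) (-1 : ℝ) t := hasDerivAt_neg t
    have := h1.scomp t h2
    simp only [hE, Function.comp_def, neg_smul, one_smul] at this ⊢
    exact this
  -- G is constant
  set G : ℝ → Matrix (Fin n) (Fin n) ℝ := fun t => F t * E (-t) with hG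
  have hGderiv : ∀ t : ℝ, HasDerivAt G 0 t := by
    intro t
    have := (hFderiv t).mul (hEderiv t)
    have heq : F t * A * E (-t) + F t * -(A * E (-t)) = 0 := by
      rw [mul_neg, mul_assoc]
      exact add_neg_cancel _
    rw [heq] at this
    exact this
  have hGconst : ∀ t : ℝ, G t = G 0 := by
    intro t
    have hdiff : Differentiable ℝ G := fun t => (hGderiv t).differentiableAt
    have hfd : ∀ t : ℝ, fderiv ℝ G t = 0 := by
      intro t
      have := (hGderiv t).deriv
      have h2 : deriv G t = 0 := this
      ext u
      have := (hGderiv t).hasFDerivAt.fderiv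
      rw [this]
      simp
    exact is_const_of_fderiv_eq_zero hdiff hfd t 0
  have hG0 : G 0 = F 0 := by
    simp only [hG, hE, neg_zero, zero_smul, NormedSpace.exp_zero, mul_one]
  -- E(-z) * E z = 1
  have hEinv : E (-z) * E z = 1 := by
    have hc : Commute ((-z) • A) (z • A) := ((Commute.refl A).smul_left (-z)).smul_right z
    have h := Matrix.exp_add_of_commute ((-z) • A) (z • A) hc
    have h0 : (-z) • A + z • A = (0 : Matrix (Fin n) (Fin n) ℝ) := by module
    rw [h0] at h
    show NormedSpace.exp ((-z) • A) * NormedSpace.exp (z • A) = 1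
    rw [← h, NormedSpace.exp_zero]
  have hFz : F z = F 0 * E z := by
    calc F z = F z * (E (-z) * E z) := by rw [hEinv, mul_one]
    _ = (F z * E (-z)) * E z := by rw [mul_assoc]
    _ = F 0 * E z := by
        have hc : F z * E (-z) = F 0 := (hGconst z).trans hG0
        rw [hc]
  -- extract the entry
  have hentry := congrFun (congrFun hFz ⟨0, hn⟩) j
  have hrhs : (F 0 * E z) ⟨0, hn⟩ j = E z ⟨0, hn⟩ j := by
    rw [Matrix.mul_apply]
    rw [Finset.sum_eq_single (⟨0, hn⟩ : Fin n)]
    · simp [hF, hf]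
    · intro m _ hm
      have hm0 : (m : ℕ) ≠ 0 := by
        intro h; apply hm; exact Fin.ext h
      simp [hF, hf, zero_pow hm0]
    · intro h; exact absurd (Finset.mem_univ _) h
  rw [hrhs] at hentry
  exact hentry.symm
end

section
/- Let P be the infinite ℕ×ℕ matrix with P(0,1)=1, P(n,n)=n for n≥1, P(n,n+1)=1 for n≥1, all other entries 0. Then for each n, uᵀ P^n e = B_n, the n-th Bell number, where u=(1,0,0,...)ᵀ and e is the all-ones vector (the sum uᵀ P^n e is finite since uᵀ P^n has finitely many nonzero entries). -/
/-- The Bell numbers, via the recurrence `B_{n+1} = Σ_{k=0}^n C(n,k) B_k`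
(the number of set partitions of an `n`-element set). -/
def bell : ℕ → ℕ
  | 0 => 1
  | n + 1 => ∑ k : Fin (n + 1), Nat.choose n k * bell k

/-- Stirling numbers of the second kind, as rationals. -/
def stir : ℕ → ℕ → ℚ
  | 0, k => if k = 0 then 1 else 0
  | _ + 1, 0 => 0
  | n + 1, k + 1 => (k + 1) * stir n (k + 1) + stir n k

lemma stir_succ (n k : ℕ) :
    stir (n + 1) (k + 1) = (k + 1) * stir n (k + 1) + stir n k := rfl

lemma stir_zero (n : ℕ) : stir n 0 = if n = 0 then 1 else 0 := by
  cases n <;> simp [stir]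

lemma bell_succ (n : ℕ) :
    bell (n + 1) = ∑ j ∈ Finset.range (n + 1), n.choose j * bell j := by
  rw [bell]
  exact Fin.sum_univ_eq_sum_range (fun k => n.choose k * bell k) (n + 1)

lemma stir_vanish : ∀ n k, n < k → stir n k = 0 := by
  intro n
  induction n with
  | zero => intro k hk; simp [stir]; omega
  | succ n ih =>
    intro k hk
    match k, hk with
    | k + 1, hk =>
      have h1 : stir n (k + 1) = 0 := ih _ (by omega)
      have h2 : stir n k = 0 := ih _ (by omega)
      rw [stir_succ, h1, h2]
      ring

lemma stir_key : ∀ n k, stir (n + 1) (k + 1) =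
    ∑ j ∈ Finset.range (n + 1), (n.choose j : ℚ) * stir j k := by
  intro n
  induction n with
  | zero => intro k; rw [stir_succ]; simp [stir]
  | succ n ih =>
    intro k
    match k with
    | 0 =>
      rw [stir_succ, stir_zero, ih 0]
      simp only [stir_zero, mul_ite, mul_one, mul_zero]
      rw [Finset.sum_ite_eq' (Finset.range (n + 1)) 0 (fun j => ((n.choose j : ℚ))),
          Finset.sum_ite_eq' (Finset.range (n + 2)) 0 (fun j => (((n+1).choose j : ℚ)))]
      simp
    | m + 1 =>
      have h2 : ∑ j ∈ Finset.range (n + 2), (n.choose j : ℚ) * stir j (m + 1)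
          = ∑ j ∈ Finset.range (n + 1), (n.choose j : ℚ) * stir j (m + 1) := by
        rw [Finset.sum_range_succ, Nat.choose_succ_self]
        simp
      have hc : ∀ j, (((n+1).choose (j+1) : ℕ) : ℚ)
          = (n.choose j : ℚ) + (n.choose (j+1) : ℚ) := by
        intro j; rw [Nat.choose_succ_succ]; push_cast; ring
      have e0 : ∑ j ∈ Finset.range (n + 2), ((n+1).choose j : ℚ) * stir j (m + 1)
          = (∑ j ∈ Finset.range (n + 1), ((n+1).choose (j+1) : ℚ) * stir (j+1) (m + 1))
            + (((n+1).choose 0 : ℕ) : ℚ) * stir 0 (m + 1) :=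
        Finset.sum_range_succ' (fun j => ((n+1).choose j : ℚ) * stir j (m + 1)) (n + 1)
      have e1 : ∑ j ∈ Finset.range (n + 1), ((n+1).choose (j+1) : ℚ) * stir (j+1) (m + 1)
          = (∑ j ∈ Finset.range (n + 1), (n.choose j : ℚ) * stir (j+1) (m + 1))
            + ∑ j ∈ Finset.range (n + 1), (n.choose (j+1) : ℚ) * stir (j+1) (m + 1) := by
        simp only [hc, add_mul]
        rw [Finset.sum_add_distrib]
      have e2 : ∑ j ∈ Finset.range (n + 2), (n.choose j : ℚ) * stir j (m + 1)
          = (∑ j ∈ Finset.range (n + 1), (n.choose (j+1) : ℚ) * stir (j+1) (m + 1))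
            + ((n.choose 0 : ℕ) : ℚ) * stir 0 (m + 1) :=
        Finset.sum_range_succ' (fun j => (n.choose j : ℚ) * stir j (m + 1)) (n + 1)
      have e3 : (((n+1).choose 0 : ℕ) : ℚ) = ((n.choose 0 : ℕ) : ℚ) := by simp
      have shift : ∑ j ∈ Finset.range (n + 2), ((n+1).choose j : ℚ) * stir j (m + 1)
          = ∑ j ∈ Finset.range (n + 1), (n.choose j : ℚ) * stir j (m + 1)
            + ∑ j ∈ Finset.range (n + 1), (n.choose j : ℚ) * stir (j + 1) (m + 1) := by
        linear_combination e0 + e1 - e2 + h2 + stir 0 (m + 1) * e3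
      rw [stir_succ, ih (m + 1), ih m, shift]
      have expand : ∀ j, (n.choose j : ℚ) * stir (j + 1) (m + 1)
          = (m + 1) * ((n.choose j : ℚ) * stir j (m + 1)) + (n.choose j : ℚ) * stir j m := by
        intro j; rw [stir_succ]; ring
      simp only [expand]
      rw [Finset.sum_add_distrib, ← Finset.mul_sum]
      push_cast
      ring

/-- For the Bell production matrix `P` (with `P(0,1)=1`, `P(n,n)=n` and `P(n,n+1)=1`
for `n ≥ 1`), the sequence `uᵀ P^n e` is the sequence of Bell numbers. Here
`row n = uᵀ P^n` (supported on the first `n+1` coordinates, since `P` is bidiagonal),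
and `uᵀ P^n e` is the finite sum of its entries. -/
theorem stmt10 (P : ℕ → ℕ → ℚ)
    (hP : ∀ i j, P i j = if j = i + 1 then 1 else if j = i then (i : ℚ) else 0)
    (row : ℕ → ℕ → ℚ)
    (hrow0 : ∀ k, row 0 k = if k = 0 then 1 else 0)
    (hrow : ∀ n k, row (n + 1) k = ∑ i ∈ Finset.range (n + 1), row n i * P i k) :
    ∀ n, ∑ k ∈ Finset.range (n + 1), row n k = (bell n : ℚ) := by
  have hrowS : ∀ n k, row n k = stir n k := by
    intro n
    induction n with
    | zero => intro k; rw [hrow0]; cases k <;> simp [stir]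
    | succ n ih =>
      intro k
      rw [hrow]
      simp only [ih, hP]
      have split : ∀ i, stir n i * (if k = i + 1 then (1:ℚ) else if k = i then (i:ℚ) else 0)
          = (if i = k - 1 ∧ k ≠ 0 then stir n i else 0)
            + (if i = k then (i:ℚ) * stir n i else 0) := by
        intro i
        split_ifs <;> (first | ring1 | (exfalso; omega))
      simp only [split]
      rw [Finset.sum_add_distrib]
      rw [Finset.sum_ite_eq' (Finset.range (n+1)) k (fun i => (i:ℚ) * stir n i)]
      have h2 : (∑ i ∈ Finset.range (n+1), if i = k - 1 ∧ k ≠ 0 then stir n i else 0)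
          = if k - 1 ∈ Finset.range (n+1) ∧ k ≠ 0 then stir n (k - 1) else 0 := by
        by_cases hk : k = 0
        · simp [hk]
        · simp only [hk, ne_eq, not_false_eq_true, and_true]
          rw [Finset.sum_ite_eq' (Finset.range (n+1)) (k-1) (fun i => stir n i)]
      rw [h2]
      simp only [Finset.mem_range]
      match k with
      | 0 => simp [stir_zero]
      | k + 1 =>
        rw [stir_succ]
        simp only [Nat.add_sub_cancel, ne_eq, Nat.succ_ne_zero, not_false_eq_true, and_true]
        by_cases h : k < n + 1
        · simp only [h, if_true]
          by_cases h' : k + 1 < n + 1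
          · simp only [h', if_true]; push_cast; ring
          · have hz : stir n (k+1) = 0 := stir_vanish _ _ (by omega)
            simp [h', hz]
        · have e1 : stir n (k+1) = 0 := stir_vanish _ _ (by omega)
          have e2 : stir n k = 0 := stir_vanish _ _ (by omega)
          simp [h, e1, e2, show ¬ (k + 1 < n + 1) by omega]
  have main : ∀ n, ∑ k ∈ Finset.range (n + 1), stir n k = (bell n : ℚ) := by
    intro n
    induction n using Nat.strong_induction_on with
    | _ n IH =>
      match n with
      | 0 => simp [stir, bell]
      | n + 1 =>
        rw [Finset.sum_range_succ' _ (n + 1)]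
        simp only [stir_key]
        rw [stir_zero]
        simp only [Nat.succ_ne_zero, if_false, add_zero]
        rw [Finset.sum_comm]
        have hj : ∀ j ∈ Finset.range (n + 1),
            ∑ k ∈ Finset.range (n + 1), (n.choose j : ℚ) * stir j k
              = (n.choose j : ℚ) * (bell j : ℚ) := by
          intro j hjmem
          have hjn : j < n + 1 := Finset.mem_range.mp hjmem
          rw [← Finset.mul_sum]
          congr 1
          rw [← IH j hjn]
          refine (Finset.sum_subset ?_ ?_).symm
          · intro x hx
            simp only [Finset.mem_range] at *
            omega
          · intro x hx hx'
            simp only [Finset.mem_range] at hx hx'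
            exact stir_vanish _ _ (by omega)
        rw [Finset.sum_congr rfl hj]
        rw [bell_succ]
        push_cast
        rfl
  intro n
  rw [Finset.sum_congr rfl (fun k _ => hrowS n k), main]
end

section
/- Let P be the infinite ℕ×ℕ matrix with p_{i,0} = i+1 and p_{i,j} = 1 for 1 ≤ j ≤ i+1, p_{i,j} = 0 for j > i+1 (rows: 1,1; 2,1,1; 3,1,1,1; ...). Then the ECO matrix A_P satisfies: the sum of the entries in row n of A_P equals C(2n, n), the central binomial coefficient, for all n ≥ 0. -/
open Finset

private lemma hs (n t : ℕ) :
    ∑ j ∈ range (t + 1), Nat.choose (n + j) n = Nat.choose (n + t + 1) (n + 1) := by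
  induction t with
  | zero => simp
  | succ t ih =>
      rw [Finset.sum_range_succ, ih]
      have : n + (t + 1) + 1 = (n + t + 1) + 1 := by ring
      rw [this, Nat.choose_succ_succ (n + t + 1) n]
      simp only [Nat.succ_eq_add_one, ← Nat.add_assoc]
      omega

private lemma hsQ (n t : ℕ) :
    ∑ j ∈ range (t + 1), (Nat.choose (n + j) n : ℚ) = (Nat.choose (n + t + 1) (n + 1) : ℚ) := by
  rw [← Nat.cast_sum]; exact_mod_cast congrArg (Nat.cast (R := ℚ)) (hs n t)

private lemma lem2 (n m : ℕ) :
    ∑ j ∈ range (m + 1), (Nat.choose (n + j) n : ℚ) * (((m - j : ℕ) : ℚ) + 1)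
      = (Nat.choose (n + m + 2) (n + 2) : ℚ) := by
  induction m with
  | zero => simp
  | succ m ih =>
      rw [Finset.sum_range_succ]
      have h1 : ∀ j ∈ range (m + 1),
          (Nat.choose (n + j) n : ℚ) * (((m + 1 - j : ℕ) : ℚ) + 1)
            = (Nat.choose (n + j) n : ℚ) * (((m - j : ℕ) : ℚ) + 1)
              + (Nat.choose (n + j) n : ℚ) := by
        intro j hj
        rw [Finset.mem_range] at hj
        have : (m + 1 - j : ℕ) = (m - j) + 1 := by omega
        rw [this]; push_cast; ring
      rw [Finset.sum_congr rfl h1, Finset.sum_add_distrib, ih, hsQ n m]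
      simp only [Nat.sub_self, Nat.cast_zero]
      have e1 : n + (m + 1) + 2 = (n + m + 2) + 1 := by ring
      have e2 : n + (m + 1) = (n + m + 1) := by ring
      rw [e1, e2, Nat.choose_succ_succ (n + m + 2) (n + 1)]
      have e3 : (n + m + 2) = (n + m + 1) + 1 := by ring
      rw [e3, Nat.choose_succ_succ (n + m + 1) n]
      push_cast; ring

/-- For the production matrix `P` with `p_{i,0} = i+1`, `p_{i,j} = 1` for
`1 ≤ j ≤ i+1` and 0 otherwise, the row sums of the ECO matrix `A_P`
(row `n` = `uᵀ Pⁿ`) are the central binomial coefficients `C(2n,n)`. -/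
theorem stmt18 (P : ℕ → ℕ → ℚ)
    (hP : ∀ i j, P i j = if j = 0 then ((i : ℚ) + 1) else if j ≤ i + 1 then 1 else 0)
    (d : ℕ → ℕ → ℚ)
    (hd0 : ∀ k, d 0 k = if k = 0 then 1 else 0)
    (hd : ∀ n k, d (n + 1) k = ∑ i ∈ Finset.range (n + 1), d n i * P i k) :
    ∀ n, ∑ k ∈ Finset.range (n + 1), d n k = (Nat.choose (2 * n) n : ℚ) := by
  -- closed form for rows n ≥ 1
  have key : ∀ n, ∀ k ≤ n + 1, d (n + 1) k = (Nat.choose (n + (n + 1 - k)) n : ℚ) := by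
    intro n
    induction n with
    | zero =>
        intro k hk
        interval_cases k <;> simp [hd, hd0, hP]
    | succ n ih =>
        intro k hk
        rw [hd]
        have step1 : ∑ i ∈ range (n + 2), d (n + 1) i * P i k
            = ∑ i ∈ range (n + 2), (Nat.choose (n + (n + 1 - i)) n : ℚ) * P i k := by
          refine Finset.sum_congr rfl fun i hi => ?_
          rw [Finset.mem_range] at hi
          rw [ih i (by omega)]
        rw [step1, ← Finset.sum_range_reflect]
        have step2 : ∀ j ∈ range (n + 2),
            (Nat.choose (n + (n + 1 - (n + 2 - 1 - j))) n : ℚ) * P (n + 2 - 1 - j) k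
              = (Nat.choose (n + j) n : ℚ) * P (n + 2 - 1 - j) k := by
          intro j hj
          rw [Finset.mem_range] at hj
          congr 3
          omega
        rw [Finset.sum_congr rfl step2]
        rcases Nat.eq_zero_or_pos k with hk0 | hkpos
        · subst hk0
          have step3 : ∀ j ∈ range (n + 2),
              (Nat.choose (n + j) n : ℚ) * P (n + 2 - 1 - j) 0
                = (Nat.choose (n + j) n : ℚ) * (((n + 1 - j : ℕ) : ℚ) + 1) := by
            intro j _
            rw [hP]; simp
          rw [Finset.sum_congr rfl step3, lem2 n (n + 1)]
          have : (n + 1) + (n + 2 - 0) = 2 * n + 3 := by omega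
          rw [this]
          have : n + (n + 1) + 2 = 2 * n + 3 := by ring
          rw [this]
          have hsym : Nat.choose (2 * n + 3) (n + 2) = Nat.choose (2 * n + 3) (n + 1) := by
            have := Nat.choose_symm (n := 2 * n + 3) (k := n + 2) (by omega)
            have e : 2 * n + 3 - (n + 2) = n + 1 := by omega
            rw [e] at this
            exact this.symm
          rw [hsym]
        · -- k ≥ 1
          set t := n + 2 - k with ht
          have htle : t + 1 ≤ n + 2 := by omega
          have step4 : ∑ j ∈ range (n + 2), (Nat.choose (n + j) n : ℚ) * P (n + 2 - 1 - j) k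
              = ∑ j ∈ range (t + 1), (Nat.choose (n + j) n : ℚ) := by
            rw [← Finset.sum_subset (Finset.range_subset_range.mpr htle)]
            · refine Finset.sum_congr rfl fun j hj => ?_
              rw [Finset.mem_range] at hj
              rw [hP]
              have h1 : ¬ (k = 0) := by omega
              have h2 : k ≤ (n + 1 - j) + 1 := by omega
              simp [h1, h2]
            · intro j hjr hjt
              rw [Finset.mem_range] at hjr hjt
              rw [hP]
              have h1 : ¬ (k = 0) := by omega
              have h2 : ¬ (k ≤ (n + 1 - j) + 1) := by omega
              simp [h1, h2]
          rw [step4, hsQ n t]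
          congr 2
          omega
  intro n
  cases n with
  | zero => simp [hd0]
  | succ n =>
      have : ∑ k ∈ range (n + 2), d (n + 1) k
          = ∑ k ∈ range (n + 2), (Nat.choose (n + (n + 1 - k)) n : ℚ) := by
        refine Finset.sum_congr rfl fun k hk => ?_
        rw [Finset.mem_range] at hk
        exact key n k (by omega)
      rw [this, ← Finset.sum_range_reflect]
      have step2 : ∀ j ∈ range (n + 2),
          (Nat.choose (n + (n + 1 - (n + 2 - 1 - j))) n : ℚ) = (Nat.choose (n + j) n : ℚ) := by
        intro j hj
        rw [Finset.mem_range] at hj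
        congr 2
        omega
      rw [Finset.sum_congr rfl step2, hsQ n (n + 1)]
      congr 2
      omega
end
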